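/- arXiv:math/0605679 — 2 statements merged into one kernel-verified Lean document; each statement's English description precedes it below -/
import Mathlib

section
/- Let Σ be the sigma-product of ω₁ copies of the Hilbert cube (with base point 0), regarded as a subspace of the product Q^T (where |T| = ω₁). If X ⊆ Σ is a retract of Σ, then the closure Y of X in Q^T is a retract of Q^T; in particular, Y is a compact absolute retract and Y, with the inclusion X ↪ Y, is the Stone–Čech compactification of X. -/
open Set Topology

/-- The Hilbert cube `I^ω`. -/
abbrev HilbertCube : Type := ℕ → unitInterval

/-- The sigma-product of `T`-many copies of the Hilbert cube with base point `0`: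
all points of the product `Q^T` having at most countably many nonzero coordinates. -/
def SigmaProd (T : Type) : Set (T → HilbertCube) :=
  {x | {t | x t ≠ 0}.Countable}

/-- `X` is a retract of the ambient space `Z`: there is a continuous `r : Z → Z` with
range contained in `X` fixing `X` pointwise. -/
def IsRetract {Z : Type} [TopologicalSpace Z] (X : Set Z) : Prop :=
  ∃ r : Z → Z, Continuous r ∧ Set.range r ⊆ X ∧ ∀ x ∈ X, r x = x

/-- A compact Hausdorff space is an absolute retract if it is (homeomorphic to)
a retract of some Tychonoff cube `[0,1]^κ`. -/
def IsCompactAR (Y : Type) [TopologicalSpace Y] : Prop :=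
  ∃ (ι : Type) (s : Set (ι → unitInterval)),
    Nonempty (Y ≃ₜ ↥s) ∧
    ∃ r : (ι → unitInterval) → (ι → unitInterval),
      Continuous r ∧ Set.range r ⊆ s ∧ ∀ y ∈ s, r y = y

section Aux
open Filter
open scoped Classical

open scoped Classical

variable {T : Type}

noncomputable def sproj (A : Set T) (z : T → HilbertCube) : T → HilbertCube :=
  fun t => if t ∈ A then z t else 0

lemma continuous_sproj (A : Set T) : Continuous (sproj A) := by
  refine continuous_pi fun t => ?_
  by_cases h : t ∈ A
  · simpa [sproj, h] using continuous_apply t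
  · simpa [sproj, h] using (continuous_const : Continuous fun _ : T → HilbertCube => (0 : HilbertCube))

lemma sproj_mem (A : Set T) (hA : A.Countable) (z : T → HilbertCube) :
    sproj A z ∈ SigmaProd T := by
  refine hA.mono ?_
  intro t ht
  simp only [mem_setOf_eq, sproj] at ht
  by_contra h
  simp [h] at ht

def suppIn (A : Set T) : Set (T → HilbertCube) := {z | ∀ t ∉ A, z t = 0}

lemma isClosed_suppIn (A : Set T) : IsClosed (suppIn A) := by
  have : suppIn A = ⋂ t ∈ Aᶜ, {z : T → HilbertCube | z t = 0} := by
    ext z; simp [suppIn]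
  rw [this]
  exact isClosed_biInter fun t _ => isClosed_eq (continuous_apply t) continuous_const

lemma suppIn_subset_sigma {A : Set T} (hA : A.Countable) : suppIn A ⊆ SigmaProd T := by
  intro z hz
  refine hA.mono ?_
  intro t ht
  by_contra h
  exact ht (hz t h)

lemma sproj_mem_suppIn (A : Set T) (z : T → HilbertCube) : sproj A z ∈ suppIn A := by
  intro t ht
  simp [sproj, ht]

lemma dense_sigmaProd : Dense (SigmaProd T) := by
  intro z
  rw [mem_closure_iff]
  intro U hU hzU
  obtain ⟨I, u, hIu, hsub⟩ := isOpen_pi_iff.mp hU z hzU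
  refine ⟨sproj ↑I z, hsub ?_, sproj_mem _ I.countable_toSet z⟩
  intro t ht
  have ht' : t ∈ I := ht
  simpa [sproj, ht] using (hIu t ht').2


lemma cover_lemma {M : Type} [MetricSpace M] (f : ↥(SigmaProd T) → M) (hf : Continuous f)
    (B : Set T) (ε : ℝ) :
    ∃ F : Finset T, B.Countable → 0 < ε →
      ∀ y ∈ suppIn B, ∃ U : Set (T → HilbertCube), IsOpen U ∧ y ∈ U ∧
        (∀ z z' : T → HilbertCube, z ∈ U → (∀ t ∈ F, z' t = z t) → z' ∈ U) ∧
        ∀ (z z' : ↥(SigmaProd T)), ↑z ∈ U → ↑z' ∈ U → dist (f z) (f z') < ε := by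
  by_cases hmain : B.Countable ∧ 0 < ε
  · obtain ⟨hB, hε⟩ := hmain
    -- pointwise data
    have key : ∀ y : ↥(suppIn B), ∃ (I : Finset T) (U : Set (T → HilbertCube)),
        IsOpen U ∧ ↑y ∈ U ∧
        (∀ z z' : T → HilbertCube, z ∈ U → (∀ t ∈ I, z' t = z t) → z' ∈ U) ∧
        ∀ (z z' : ↥(SigmaProd T)), ↑z ∈ U → ↑z' ∈ U → dist (f z) (f z') < ε := by
      rintro ⟨y, hy⟩
      have hyS : y ∈ SigmaProd T := suppIn_subset_sigma hB hy
      set yy : ↥(SigmaProd T) := ⟨y, hyS⟩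
      have hso : IsOpen (f ⁻¹' Metric.ball (f yy) (ε / 2)) :=
        Metric.isOpen_ball.preimage hf
      obtain ⟨O, hO, hOeq⟩ := isOpen_induced_iff.mp hso
      have hyO : y ∈ O := by
        have : yy ∈ f ⁻¹' Metric.ball (f yy) (ε / 2) := by
          simp [Metric.mem_ball, dist_self, half_pos hε]
        rw [← hOeq] at this
        exact this
      obtain ⟨I, u, hIu, hsub⟩ := isOpen_pi_iff.mp hO y hyO
      refine ⟨I, (↑I : Set T).pi u, isOpen_set_pi I.finite_toSet (fun i hi => (hIu i hi).1),
        ?_, ?_, ?_⟩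
      · intro t ht
        exact (hIu t ht).2
      · intro z z' hz hagree t ht
        rw [hagree t ht]
        exact hz t ht
      · intro z z' hz hz'
        have h1 : z ∈ f ⁻¹' Metric.ball (f yy) (ε / 2) := by
          rw [← hOeq]; exact hsub hz
        have h2 : z' ∈ f ⁻¹' Metric.ball (f yy) (ε / 2) := by
          rw [← hOeq]; exact hsub hz'
        have d1 : dist (f z) (f yy) < ε / 2 := h1
        have d2 : dist (f z') (f yy) < ε / 2 := h2
        calc dist (f z) (f z') ≤ dist (f z) (f yy) + dist (f z') (f yy) := dist_triangle_right _ _ _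
          _ < ε / 2 + ε / 2 := by linarith
          _ = ε := by ring
    choose I U hUo hUm hUdet hUosc using key
    have hcompact : IsCompact (suppIn B) := (isClosed_suppIn B).isCompact
    have hcover : suppIn B ⊆ ⋃ y : ↥(suppIn B), U y := fun y hy =>
      mem_iUnion.mpr ⟨⟨y, hy⟩, hUm ⟨y, hy⟩⟩
    obtain ⟨s, hs⟩ := hcompact.elim_finite_subcover U hUo hcover
    refine ⟨s.biUnion I, fun _ _ y hy => ?_⟩
    obtain ⟨y₀, hy₀s, hyU⟩ := mem_iUnion₂.mp (hs hy)
    refine ⟨U y₀, hUo y₀, hyU, ?_, hUosc y₀⟩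
    intro z z' hz hagree
    refine hUdet y₀ z z' hz fun t ht => hagree t (Finset.mem_biUnion.mpr ⟨y₀, hy₀s, ht⟩)
  · exact ⟨∅, fun h1 h2 => absurd ⟨h1, h2⟩ hmain⟩

lemma ext_lemma {M : Type} [MetricSpace M] (f : ↥(SigmaProd T) → M) (hf : Continuous f) :
    ∃ g : (T → HilbertCube) → M, Continuous g ∧ ∀ x : ↥(SigmaProd T), g ↑x = f x := by
  choose Fc hFc using cover_lemma f hf
  set step : Set T → Set T := fun B => B ∪ ⋃ m : ℕ, (Fc B (1 / (m + 1)) : Set T) with hstep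
  set A : ℕ → Set T := fun n => Nat.rec ∅ (fun _ B => step B) n with hA
  have hAsucc : ∀ n, A (n + 1) = step (A n) := fun n => rfl
  have hAc : ∀ n, (A n).Countable := by
    intro n
    induction n with
    | zero => exact countable_empty
    | succ n ih =>
      rw [hAsucc]
      exact ih.union (countable_iUnion fun m => (Fc (A n) (1 / (m + 1))).countable_toSet)
  have hmono : ∀ n, A n ⊆ A (n + 1) := by
    intro n; rw [hAsucc]; exact subset_union_left
  have hmono' : ∀ {a b : ℕ}, a ≤ b → A a ⊆ A b := by
    intro a b hab
    induction hab with
    | refl => exact subset_rfl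
    | step h ih => exact ih.trans (hmono _)
  set As : Set T := ⋃ n, A n with hAs
  have hAsc : As.Countable := countable_iUnion hAc
  have hFsub : ∀ n m : ℕ, (Fc (A n) (1 / (m + 1)) : Set T) ⊆ As := by
    intro n m
    refine subset_trans ?_ (subset_iUnion A (n + 1))
    rw [hAsucc]
    exact (subset_iUnion (fun m : ℕ => (Fc (A n) (1 / (m + 1)) : Set T)) m).trans
      subset_union_right
  -- the key identity
  have key : ∀ (x : T → HilbertCube) (hx : x ∈ SigmaProd T),
      f ⟨x, hx⟩ = f ⟨sproj As x, sproj_mem As hAsc x⟩ := by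
    intro x hx
    set u : ℕ → (T → HilbertCube) := fun n => sproj (A n) x with hu
    set v : ℕ → (T → HilbertCube) := fun n t => if t ∈ As ∧ t ∉ A n then 0 else x t with hv
    have hum : ∀ n, u n ∈ SigmaProd T := fun n => sproj_mem _ (hAc n) x
    have hvm : ∀ n, v n ∈ SigmaProd T := by
      intro n
      refine hx.mono ?_
      intro t ht
      simp only [mem_setOf_eq, hv] at ht ⊢
      by_contra h
      simp [h] at ht
    -- distance bound
    have hbound : ∀ m n : ℕ,
        dist (f ⟨v n, hvm n⟩) (f ⟨u n, hum n⟩) ≤ 1 / (m + 1) := by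
      intro m n
      have hpos : (0 : ℝ) < 1 / (m + 1) := by positivity
      obtain ⟨U, hUo, hUm, hUdet, hUosc⟩ :=
        hFc (A n) (1 / (m + 1)) (hAc n) hpos (u n) (sproj_mem_suppIn _ _)
      have hvU : v n ∈ U := by
        refine hUdet (u n) (v n) hUm ?_
        intro t ht
        have htAs : t ∈ As := hFsub n m ht
        by_cases htA : t ∈ A n
        · simp [hu, hv, sproj, htA]
        · simp [hu, hv, sproj, htA, htAs]
      exact le_of_lt (hUosc ⟨v n, hvm n⟩ ⟨u n, hum n⟩ hvU hUm)
    -- limits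
    have hulim : Tendsto (fun n => u n) atTop (nhds (sproj As x)) := by
      rw [tendsto_pi_nhds]
      intro t
      by_cases htAs : t ∈ As
      · obtain ⟨N, hN⟩ := mem_iUnion.mp htAs
        refine tendsto_atTop_of_eventually_const (i₀ := N) ?_
        intro n hn
        have : t ∈ A n := hmono' hn hN
        simp [hu, sproj, this, htAs]
      · have : ∀ n, t ∉ A n := fun n h => htAs (mem_iUnion.mpr ⟨n, h⟩)
        refine tendsto_atTop_of_eventually_const (i₀ := 0) ?_
        intro n _
        simp [hu, sproj, this n, htAs]
    have hvlim : Tendsto (fun n => v n) atTop (nhds x) := by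
      rw [tendsto_pi_nhds]
      intro t
      by_cases htAs : t ∈ As
      · obtain ⟨N, hN⟩ := mem_iUnion.mp htAs
        refine tendsto_atTop_of_eventually_const (i₀ := N) ?_
        intro n hn
        have : t ∈ A n := hmono' hn hN
        simp [hv, this]
      · refine tendsto_atTop_of_eventually_const (i₀ := 0) ?_
        intro n _
        simp [hv, htAs]
    have hflim1 : Tendsto (fun n => f ⟨v n, hvm n⟩) atTop (nhds (f ⟨x, hx⟩)) := by
      refine (hf.tendsto _).comp ?_
      exact tendsto_subtype_rng.mpr hvlim
    have hflim2 : Tendsto (fun n => f ⟨u n, hum n⟩) atTop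
        (nhds (f ⟨sproj As x, sproj_mem As hAsc x⟩)) := by
      refine (hf.tendsto _).comp ?_
      exact tendsto_subtype_rng.mpr hulim
    have hdlim : Tendsto (fun n => dist (f ⟨v n, hvm n⟩) (f ⟨u n, hum n⟩)) atTop
        (nhds (dist (f ⟨x, hx⟩) (f ⟨sproj As x, sproj_mem As hAsc x⟩))) :=
      hflim1.dist hflim2
    have hdle : ∀ m : ℕ, dist (f ⟨x, hx⟩) (f ⟨sproj As x, sproj_mem As hAsc x⟩) ≤ 1 / (m + 1) :=
      fun m => le_of_tendsto hdlim (Eventually.of_forall (hbound m))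
    have hd0 : dist (f ⟨x, hx⟩) (f ⟨sproj As x, sproj_mem As hAsc x⟩) ≤ 0 := by
      by_contra h
      push_neg at h
      obtain ⟨m, hm⟩ := exists_nat_one_div_lt h
      exact absurd (hdle m) (by linarith)
    exact eq_of_dist_eq_zero (le_antisymm hd0 dist_nonneg)
  refine ⟨fun z => f ⟨sproj As z, sproj_mem As hAsc z⟩,
    hf.comp (Continuous.subtype_mk (continuous_sproj As) _), ?_⟩
  rintro ⟨x, hx⟩
  exact (key x hx).symm

set_option linter.unusedVariables false

/-- The curry homeomorphism. -/
noncomputable def curryHomeo (T : Type) : ((T × ℕ) → unitInterval) ≃ₜ (T → HilbertCube) where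
  toEquiv := Equiv.curry T ℕ unitInterval
  continuous_toFun := continuous_pi fun t => continuous_pi fun n => continuous_apply (t, n)
  continuous_invFun := continuous_pi fun p => (continuous_apply p.2).comp (continuous_apply p.1)

/-- if `X ⊆ Σ` is a retract of the sigma-product `Σ` of `ω₁` copies of the
Hilbert cube, then the closure `Y` of `X` in `Q^T` is a retract of `Q^T`; in particular,
`Y` is a compact absolute retract and `Y`, with the inclusion `X ↪ Y`, is the Stone–Čech
compactification of `X`. -/
theorem closure_of_retract_is_retract_and_stoneCech
    (T : Type) (hT : Cardinal.mk T = Cardinal.aleph 1)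
    (X : Set ↥(SigmaProd T)) (hX : IsRetract X) :
    (∃ r : (T → HilbertCube) → (T → HilbertCube),
      Continuous r ∧ Set.range r ⊆ closure (Subtype.val '' X) ∧
      ∀ y ∈ closure (Subtype.val '' X), r y = y) ∧
    IsCompact (closure (Subtype.val '' X)) ∧
    IsCompactAR ↥(closure (Subtype.val '' X)) ∧
    ∀ (K : Type) [TopologicalSpace K] [CompactSpace K] [T2Space K]
      (f : ↥X → K), Continuous f →
      ∃ g : ↥(closure (Subtype.val '' X)) → K, Continuous g ∧
        ∀ x : ↥X, g ⟨(x : ↥(SigmaProd T)).1, subset_closure ⟨x.1, x.2, rfl⟩⟩ = f x := by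
  obtain ⟨r, hrc, hrr, hrfix⟩ := hX
  set X' : Set (T → HilbertCube) := Subtype.val '' X with hX'
  set Y : Set (T → HilbertCube) := closure X' with hY
  -- the retraction of Q^T onto Y
  have hcoord : ∀ (t : T) (i : ℕ),
      ∃ g : (T → HilbertCube) → unitInterval, Continuous g ∧
        ∀ x : ↥(SigmaProd T), g ↑x = (r x : T → HilbertCube) t i := by
    intro t i
    have h1 : Continuous (fun x : ↥(SigmaProd T) => (r x : T → HilbertCube)) :=
      continuous_subtype_val.comp hrc
    have h2 : Continuous (fun x : ↥(SigmaProd T) => (r x : T → HilbertCube) t) :=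
      (continuous_apply t).comp h1
    exact ext_lemma (fun x => (r x : T → HilbertCube) t i) ((continuous_apply i).comp h2)
  choose G hGc hGx using hcoord
  set R : (T → HilbertCube) → (T → HilbertCube) := fun z t i => G t i z with hR
  have hRc : Continuous R := continuous_pi fun t => continuous_pi fun i => hGc t i
  have hRx : ∀ x : ↥(SigmaProd T), R ↑x = ↑(r x) := by
    intro x
    funext t i
    exact hGx t i x
  have hRfixX' : ∀ z ∈ X', R z = z := by
    rintro z ⟨w, hwX, rfl⟩
    rw [hRx w, hrfix w hwX]
  have hRfixY : ∀ y ∈ Y, R y = y := by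
    have hclosed : IsClosed {z : T → HilbertCube | R z = z} :=
      isClosed_eq hRc continuous_id
    intro y hy
    exact hclosed.closure_subset_iff.mpr (fun z hz => hRfixX' z hz) hy
  have hRrange : Set.range R ⊆ Y := by
    have h1 : Set.range R = R '' closure (SigmaProd T) := by
      rw [dense_sigmaProd.closure_eq, image_univ]
    rw [h1]
    refine (image_closure_subset_closure_image hRc).trans (closure_mono ?_)
    rintro z ⟨w, hw, rfl⟩
    rw [hRx ⟨w, hw⟩]
    exact ⟨r ⟨w, hw⟩, hrr ⟨⟨w, hw⟩, rfl⟩, rfl⟩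
  refine ⟨⟨R, hRc, hRrange, hRfixY⟩, isClosed_closure.isCompact, ?_, ?_⟩
  · -- IsCompactAR
    set e := (curryHomeo T).symm
    refine ⟨T × ℕ, e '' Y, ⟨(Homeomorph.image e Y)⟩ ,
      e ∘ R ∘ e.symm, ?_, ?_, ?_⟩
    · exact e.continuous.comp (hRc.comp e.symm.continuous)
    · rintro w ⟨z, rfl⟩
      exact ⟨R (e.symm z), hRrange ⟨e.symm z, rfl⟩, rfl⟩
    · rintro w ⟨y, hyY, rfl⟩
      simp only [Function.comp_apply, Homeomorph.symm_apply_apply]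
      rw [hRfixY y hyY]
  · -- Stone-Cech
    intro K _ _ _ f hfc
    -- the retraction onto X as a map to the subtype
    set r' : ↥(SigmaProd T) → ↥X := fun z => ⟨r z, hrr ⟨z, rfl⟩⟩ with hr'
    have hr'c : Continuous r' := hrc.subtype_mk _
    -- embedding of K into a cube
    set J := C(K, unitInterval) with hJ
    set β : K → (J → unitInterval) := fun k φ => φ k with hβ
    have hβc : Continuous β := continuous_pi fun φ => φ.continuous
    have hβinj : Function.Injective β := by
      intro a b hab
      by_contra hne
      obtain ⟨φ, hφ0, hφ1, hφmem⟩ := exists_continuous_zero_one_of_isClosed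
        (isClosed_singleton (x := a)) (isClosed_singleton (x := b))
        (disjoint_singleton.mpr hne)
      set ψ : C(K, unitInterval) := ⟨fun k => Set.projIcc 0 1 zero_le_one (φ k),
        continuous_projIcc.comp φ.continuous⟩ with hψ
      have : ψ a = ψ b := congrFun hab ψ
      have ha : φ a = 0 := hφ0 rfl
      have hb : φ b = 1 := hφ1 rfl
      rw [Subtype.ext_iff] at this
      simp [hψ, ha, hb, Set.projIcc] at this
    have hβrange_closed : IsClosed (Set.range β) :=
      (isCompact_range hβc).isClosed
    set eK : K ≃ₜ ↥(Set.range β) :=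
      Continuous.homeoOfEquivCompactToT2 (f := Equiv.ofInjective β hβinj)
        (hβc.subtype_mk _) with heK
    -- extend β ∘ f ∘ r' over Q^T, coordinatewise
    have hcoord2 : ∀ φ : J,
        ∃ g : (T → HilbertCube) → unitInterval, Continuous g ∧
          ∀ x : ↥(SigmaProd T), g ↑x = φ (f (r' x)) := by
      intro φ
      exact ext_lemma (fun z => φ (f (r' z)))
        (φ.continuous.comp (hfc.comp hr'c))
    choose H hHc hHx using hcoord2
    set Hb : (T → HilbertCube) → (J → unitInterval) := fun z φ => H φ z with hHb
    have hHbc : Continuous Hb := continuous_pi fun φ => hHc φ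
    have hHbx : ∀ x : ↥(SigmaProd T), Hb ↑x = β (f (r' x)) := by
      intro x; funext φ; exact hHx φ x
    have hHbY : ∀ y ∈ Y, Hb y ∈ Set.range β := by
      intro y hy
      have hXc : X' ⊆ Hb ⁻¹' (Set.range β) := by
        rintro z ⟨w, hwX, rfl⟩
        simp only [mem_preimage, hHbx w]
        exact ⟨f (r' w), rfl⟩
      exact (hβrange_closed.preimage hHbc).closure_subset_iff.mpr hXc hy
    refine ⟨fun y => eK.symm ⟨Hb ↑y, hHbY ↑y y.2⟩, ?_, ?_⟩
    · exact eK.symm.continuous.comp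
        ((hHbc.comp continuous_subtype_val).subtype_mk _)
    · intro x
      have h1 : Hb ↑(↑x : ↥(SigmaProd T)) = β (f (r' ↑x)) := hHbx _
      have h2 : r' (↑x : ↥(SigmaProd T)) = x := by
        apply Subtype.ext
        exact hrfix ↑x x.2
      apply_fun eK using eK.injective
      rw [Homeomorph.apply_symm_apply]
      apply Subtype.ext
      show Hb ↑(↑x : ↥(SigmaProd T)) = _
      rw [h1, h2]
      rfl

end Aux
end

section
/- Let Σ be the sigma-product of ω₁ copies of the Hilbert cube (with base point 0), regarded as a dense subspace of the product Q^T (where |T| = ω₁). Then Σ is pseudocompact and the inclusion Σ ↪ Q^T realizes Q^T as the Stone–Čech compactification of Σ; that is, every continuous map from Σ to a compact Hausdorff space extends continuously to Q^T. -/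
open Set Topology Filter

section Aux

variable {T : Type}

/-- A cluster point of a filter containing a closed set lies in that set. -/
lemma SigmaProdAux.clusterPt_mem_closed {α : Type*} [TopologicalSpace α] {c : α} {F : Filter α}
    (h : ClusterPt c F) {D : Set α} (hD : IsClosed D) (hF : D ∈ F) : c ∈ D := by
  have : ClusterPt c (𝓟 D) := h.mono (le_principal_iff.2 hF)
  rw [← hD.closure_eq]
  exact mem_closure_iff_clusterPt.2 this

/-- The set of points of the sigma-product supported on a countable set is compact. -/
lemma SigmaProdAux.isCompact_supported (A : Set T) (hA : A.Countable) :
    IsCompact {x : ↥(SigmaProd T) | ∀ t, t ∉ A → x.1 t = 0} := by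
  rw [Subtype.isCompact_iff]
  have himg : (Subtype.val '' {x : ↥(SigmaProd T) | ∀ t, t ∉ A → x.1 t = 0})
      = {x : T → HilbertCube | ∀ t, t ∉ A → x t = 0} := by
    ext x
    constructor
    · rintro ⟨⟨y, hy⟩, hmem, rfl⟩; exact hmem
    · intro hx
      refine ⟨⟨x, ?_⟩, hx, rfl⟩
      refine Set.Countable.mono (fun t ht => ?_) hA
      by_contra h
      exact ht (hx t h)
  rw [himg]
  have hclosed : IsClosed {x : T → HilbertCube | ∀ t, t ∉ A → x t = 0} := by
    have he : {x : T → HilbertCube | ∀ t, t ∉ A → x t = 0} =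
        ⋂ t ∈ Aᶜ, {x : T → HilbertCube | x t = 0} := by
      ext x; simp [mem_iInter]
    rw [he]
    exact isClosed_biInter fun t _ => isClosed_eq (continuous_apply t) continuous_const
  exact hclosed.isCompact

/-- Key lemma: a continuous real-valued function on the sigma-product has, for every `ε > 0`,
a countable set of coordinates determining its values up to `ε`. -/
lemma SigmaProdAux.exists_countable_dep (f : ↥(SigmaProd T) → ℝ) (hf : Continuous f)
    {ε : ℝ} (hε : 0 < ε) :
    ∃ S : Set T, S.Countable ∧
      ∀ x y : ↥(SigmaProd T), (∀ t ∈ S, x.1 t = y.1 t) → |f x - f y| ≤ ε := by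
  by_contra hcon
  push_neg at hcon
  choose X Y hagree hgap using hcon
  -- build an increasing sequence of countable coordinate sets
  let A : ℕ → {S : Set T // S.Countable} := fun n => Nat.rec
    ⟨∅, countable_empty⟩
    (fun _ p => ⟨p.1 ∪ ({t | (X p.1 p.2).1 t ≠ 0} ∪ {t | (Y p.1 p.2).1 t ≠ 0}),
      p.2.union (((X p.1 p.2).2).union ((Y p.1 p.2).2))⟩) n
  have hstep : ∀ n, (A (n+1)).1 =
      (A n).1 ∪ ({t | (X (A n).1 (A n).2).1 t ≠ 0} ∪ {t | (Y (A n).1 (A n).2).1 t ≠ 0}) :=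
    fun n => rfl
  have hmono : Monotone (fun n => (A n).1) := by
    apply monotone_nat_of_le_succ
    intro n
    rw [hstep n]
    exact subset_union_left
  set xs : ℕ → ↥(SigmaProd T) := fun n => X (A n).1 (A n).2 with hxs
  set ys : ℕ → ↥(SigmaProd T) := fun n => Y (A n).1 (A n).2 with hys
  set SA : Set T := ⋃ n, (A n).1 with hSAdef
  have hSA : SA.Countable := countable_iUnion fun n => (A n).2
  set C : Set ↥(SigmaProd T) := {x | ∀ t, t ∉ SA → x.1 t = 0} with hCdef
  have hC : IsCompact C := SigmaProdAux.isCompact_supported SA hSA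
  set z : ℕ → ↥(SigmaProd T) × ↥(SigmaProd T) := fun n => (xs n, ys n) with hzdef
  have hzC : ∀ n, z n ∈ C ×ˢ C := by
    intro n
    constructor
    · intro t ht
      by_contra h
      exact ht (mem_iUnion.2 ⟨n + 1, (hstep n) ▸ Or.inr (Or.inl h)⟩)
    · intro t ht
      by_contra h
      exact ht (mem_iUnion.2 ⟨n + 1, (hstep n) ▸ Or.inr (Or.inr h)⟩)
  have hle : map z atTop ≤ 𝓟 (C ×ˢ C) :=
    le_principal_iff.2 (mem_map.2 (Filter.Eventually.of_forall hzC))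
  obtain ⟨p, hpC, hp⟩ := (hC.prod hC).exists_clusterPt hle
  -- the cluster point has equal components
  have hpe : p.1 = p.2 := by
    apply Subtype.ext
    funext t
    by_cases ht : t ∈ SA
    · obtain ⟨n, hn⟩ := mem_iUnion.1 ht
      have hφc : Continuous (fun q : ↥(SigmaProd T) × ↥(SigmaProd T) =>
          ((q.1.1 t, q.2.1 t) : HilbertCube × HilbertCube)) :=
        ((continuous_apply t).comp (continuous_subtype_val.comp continuous_fst)).prodMk
          ((continuous_apply t).comp (continuous_subtype_val.comp continuous_snd))
      have hcl := hp.map hφc.continuousAt tendsto_map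
      have hdiagmem : {q : HilbertCube × HilbertCube | q.1 = q.2} ∈
          map (fun q : ↥(SigmaProd T) × ↥(SigmaProd T) => ((q.1.1 t, q.2.1 t))) (map z atTop) := by
        rw [Filter.map_map, mem_map]
        filter_upwards [Filter.eventually_ge_atTop n] with m hm
        exact hagree (A m).1 (A m).2 t (hmono hm hn)
      have hdiagcl : IsClosed {q : HilbertCube × HilbertCube | q.1 = q.2} :=
        isClosed_eq continuous_fst continuous_snd
      exact SigmaProdAux.clusterPt_mem_closed hcl hdiagcl hdiagmem
    · rw [hpC.1 t ht, hpC.2 t ht]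
  -- contradiction with the gaps
  have hhc : Continuous (fun q : ↥(SigmaProd T) × ↥(SigmaProd T) => |f q.1 - f q.2|) :=
    ((hf.comp continuous_fst).sub (hf.comp continuous_snd)).abs
  have hcl := hp.map hhc.continuousAt tendsto_map
  have hmem : Ici ε ∈ map (fun q : ↥(SigmaProd T) × ↥(SigmaProd T) => |f q.1 - f q.2|)
      (map z atTop) := by
    rw [Filter.map_map, mem_map]
    refine Filter.Eventually.of_forall fun m => ?_
    exact le_of_lt (hgap (A m).1 (A m).2)
  have hge : |f p.1 - f p.2| ∈ Ici ε :=
    SigmaProdAux.clusterPt_mem_closed hcl isClosed_Ici hmem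
  rw [hpe, sub_self, abs_zero] at hge
  exact absurd hge (by simpa using hε)

/-- Every continuous real-valued function on the sigma-product extends continuously
over the whole product. -/
lemma SigmaProdAux.extend_real (f : ↥(SigmaProd T) → ℝ) (hf : Continuous f) :
    ∃ g : (T → HilbertCube) → ℝ, Continuous g ∧ ∀ x : ↥(SigmaProd T), g x.1 = f x := by
  classical
  have key : ∀ n : ℕ, ∃ S : Set T, S.Countable ∧
      ∀ x y : ↥(SigmaProd T), (∀ t ∈ S, x.1 t = y.1 t) → |f x - f y| ≤ 1 / (n + 1) :=
    fun n => SigmaProdAux.exists_countable_dep f hf (by positivity)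
  choose S hScnt hS using key
  set U : Set T := ⋃ n, S n with hUdef
  have hU : U.Countable := countable_iUnion hScnt
  have hmem : ∀ x : T → HilbertCube, (fun t => if t ∈ U then x t else 0) ∈ SigmaProd T := by
    intro x
    refine Set.Countable.mono (fun t ht => ?_) hU
    simp only [mem_setOf_eq] at ht
    by_contra h
    exact ht (by simp [h])
  set r : (T → HilbertCube) → ↥(SigmaProd T) := fun x => ⟨fun t => if t ∈ U then x t else 0,
    hmem x⟩ with hrdef
  have hr : Continuous r := by
    refine Continuous.subtype_mk (continuous_pi fun t => ?_) _
    by_cases ht : t ∈ U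
    · simpa [ht] using continuous_apply t
    · simp only [ht, if_false]
      exact continuous_const
  have hrx : ∀ x : ↥(SigmaProd T), f (r x.1) = f x := by
    intro x
    have hb : ∀ n : ℕ, |f (r x.1) - f x| ≤ 1 / (n + 1 : ℝ) := by
      intro n
      refine hS n (r x.1) x fun t ht => ?_
      simp [r, if_pos (mem_iUnion.2 ⟨n, ht⟩), show t ∈ U from mem_iUnion.2 ⟨n, ht⟩]
    have h0 : |f (r x.1) - f x| ≤ 0 :=
      ge_of_tendsto' tendsto_one_div_add_atTop_nhds_zero_nat hb
    have h1 : f (r x.1) - f x = 0 := abs_nonpos_iff.1 h0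
    linarith
  exact ⟨fun x => f (r x), hf.comp hr, fun x => hrx x⟩

end Aux

/-- the sigma-product `Σ` of `ω₁` copies of the Hilbert cube is a dense
pseudocompact subspace of `Q^T`, and the inclusion `Σ ↪ Q^T` realizes `Q^T` as the
Stone–Čech compactification of `Σ`: every continuous map from `Σ` to a compact Hausdorff
space extends continuously over `Q^T`. -/
theorem sigmaProd_pseudocompact_and_stoneCech
    (T : Type) (hT : Cardinal.mk T = Cardinal.aleph 1) :
    (∀ f : ↥(SigmaProd T) → ℝ, Continuous f → ∃ M : ℝ, ∀ x, |f x| ≤ M) ∧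
    Dense (SigmaProd T) ∧
    ∀ (K : Type) [TopologicalSpace K] [CompactSpace K] [T2Space K]
      (f : ↥(SigmaProd T) → K), Continuous f →
      ∃ g : (T → HilbertCube) → K, Continuous g ∧ ∀ x : ↥(SigmaProd T), g x.1 = f x := by
  classical
  have hdense : Dense (SigmaProd T) := by
    rw [dense_iff_inter_open]
    intro V hV ⟨x, hx⟩
    obtain ⟨I, u, hu, hsub⟩ := isOpen_pi_iff.1 hV x hx
    refine ⟨fun t => if t ∈ I then x t else 0, hsub fun i hi => ?_, ?_⟩
    · rw [if_pos (Finset.mem_coe.1 hi)]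
      exact (hu i hi).2
    · refine Set.Countable.mono (fun t ht => ?_) I.countable_toSet
      simp only [mem_setOf_eq] at ht
      by_contra h
      rw [if_neg (fun hI => h (Finset.mem_coe.2 hI))] at ht
      exact ht rfl
  refine ⟨?_, hdense, ?_⟩
  · intro f hf
    obtain ⟨g, hg, hgx⟩ := SigmaProdAux.extend_real f hf
    obtain ⟨M, hM⟩ := (isCompact_range hg.abs).bddAbove
    refine ⟨M, fun x => ?_⟩
    rw [← hgx x]
    exact hM (mem_range_self x.1)
  · intro K _ _ _ f hf
    -- embed K into a cube of real-valued functions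
    let ι : K → (C(K, ℝ) → ℝ) := fun k h => h k
    have hιc : Continuous ι := continuous_pi fun h => h.continuous
    have hιinj : Function.Injective ι := by
      intro a b hab
      by_contra hne
      obtain ⟨h, h0, h1, -⟩ := exists_continuous_zero_one_of_isClosed
        (isClosed_singleton (x := a)) (isClosed_singleton (x := b))
        (by simpa [Set.disjoint_singleton] using hne)
      have hval : h a = h b := congrFun hab h
      rw [h0 (mem_singleton a), h1 (mem_singleton b)] at hval
      simp at hval
    have hemb : Topology.IsEmbedding ι := (hιc.isClosedEmbedding hιinj).toIsEmbedding
    -- extend each real coordinate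
    have hcomp : ∀ h : C(K, ℝ), ∃ g : (T → HilbertCube) → ℝ,
        Continuous g ∧ ∀ x : ↥(SigmaProd T), g x.1 = h (f x) :=
      fun h => SigmaProdAux.extend_real (fun x => h (f x)) (h.continuous.comp hf)
    choose G hGc hGx using hcomp
    let Φ : (T → HilbertCube) → (C(K, ℝ) → ℝ) := fun x h => G h x
    have hΦc : Continuous Φ := continuous_pi fun h => hGc h
    have hPhiS : ∀ x : ↥(SigmaProd T), Φ x.1 = ι (f x) := by
      intro x
      funext h
      exact hGx h x
    have hrange : ∀ x, Φ x ∈ range ι := by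
      have hclosed : IsClosed (Φ ⁻¹' (range ι)) :=
        ((isCompact_range hιc).isClosed).preimage hΦc
      have hsub : SigmaProd T ⊆ Φ ⁻¹' (range ι) :=
        fun x hx => ⟨f ⟨x, hx⟩, (hPhiS ⟨x, hx⟩).symm⟩
      exact fun x => closure_minimal hsub hclosed (hdense x)
    refine ⟨fun x => (hrange x).choose, ?_, ?_⟩
    · rw [hemb.continuous_iff]
      have : (ι ∘ fun x => (hrange x).choose) = Φ := funext fun x => (hrange x).choose_spec
      rwa [this]
    · intro x
      apply hιinj
      rw [(hrange x.1).choose_spec, hPhiS x]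
end
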